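/- Let a < b be real numbers, τ > 0, let Ψ : [a,b] → ℝ be continuous with Ψ(x) > 0 for all x ∈ [a,b], and let g : [a,b] → ℝ be continuous. Set ζ := max(sup_{x∈[a,b]} Ψ(x), sup_{x∈[a,b]} exp(g(x)/τ)). Then sup_{x∈[a,b]} |τ · log(Ψ(x)) − g(x)| ≥ (τ/ζ) · sup_{x∈[a,b]} |Ψ(x) − exp(g(x)/τ)|. -/

import Mathlib

open Real Set

/-- `|e^u - e^v| ≤ max (e^u) (e^v) * |u - v|`. -/
lemma abs_exp_sub_exp_le (u v : ℝ) :
    |Real.exp u - Real.exp v| ≤ max (Real.exp u) (Real.exp v) * |u - v| := by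
  wlog h : v ≤ u generalizing u v
  · have := this v u (le_of_not_ge h)
    rwa [abs_sub_comm (Real.exp v), max_comm, abs_sub_comm v u] at this
  have h1 : Real.exp u - Real.exp v ≤ Real.exp u * (u - v) := by
    have key : 1 - (u - v) ≤ Real.exp (-(u - v)) := by
      have := Real.add_one_le_exp (-(u - v)); linarith
    have := mul_le_mul_of_nonneg_left key (Real.exp_pos u).le
    rw [← Real.exp_add] at this
    have huv : u + -(u - v) = v := by ring
    rw [huv] at this; nlinarith [Real.exp_pos u]
  have h2 : Real.exp v ≤ Real.exp u := Real.exp_le_exp.mpr h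
  rw [abs_of_nonneg (by linarith), abs_of_nonneg (by linarith)]
  calc Real.exp u - Real.exp v ≤ Real.exp u * (u - v) := h1
    _ ≤ max (Real.exp u) (Real.exp v) * (u - v) :=
      mul_le_mul_of_nonneg_right (le_max_left _ _) (by linarith)

theorem log_comparison_sup_bound
    (a b τ : ℝ) (hab : a < b) (hτ : 0 < τ)
    (Ψ g : ℝ → ℝ)
    (hΨc : ContinuousOn Ψ (Set.Icc a b))
    (hΨpos : ∀ x ∈ Set.Icc a b, 0 < Ψ x)
    (hgc : ContinuousOn g (Set.Icc a b)) :
    (τ / max (sSup (Ψ '' Set.Icc a b))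
        (sSup ((fun x => Real.exp (g x / τ)) '' Set.Icc a b))) *
      sSup ((fun x => |Ψ x - Real.exp (g x / τ)|) '' Set.Icc a b)
    ≤ sSup ((fun x => |τ * Real.log (Ψ x) - g x|) '' Set.Icc a b) := by
  set ζ := max (sSup (Ψ '' Set.Icc a b))
      (sSup ((fun x => Real.exp (g x / τ)) '' Set.Icc a b)) with hζ
  have hK : IsCompact (Set.Icc a b) := isCompact_Icc
  have hne : (Set.Icc a b).Nonempty := Set.nonempty_Icc.mpr hab.le
  have hec : ContinuousOn (fun x => Real.exp (g x / τ)) (Set.Icc a b) :=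
    (Real.continuous_exp.comp_continuousOn (hgc.div_const τ))
  -- bounded above
  have hbd1 : BddAbove (Ψ '' Set.Icc a b) := (hK.image_of_continuousOn hΨc).bddAbove
  have hbd2 : BddAbove ((fun x => Real.exp (g x / τ)) '' Set.Icc a b) :=
    (hK.image_of_continuousOn hec).bddAbove
  have hζpos : 0 < ζ := by
    have : Real.exp (g a / τ) ≤ sSup ((fun x => Real.exp (g x / τ)) '' Set.Icc a b) :=
      le_csSup hbd2 ⟨a, Set.left_mem_Icc.mpr hab.le, rfl⟩
    have := lt_of_lt_of_le (Real.exp_pos _) this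
    exact lt_max_of_lt_right this
  set S := sSup ((fun x => |τ * Real.log (Ψ x) - g x|) '' Set.Icc a b) with hS
  have hSnn : 0 ≤ S := by
    have : |τ * Real.log (Ψ a) - g a| ≤ S := by
      apply le_csSup
      · exact (hK.image_of_continuousOn (by
          apply ContinuousOn.abs
          exact ((continuousOn_const.mul ((Real.continuousOn_log.comp hΨc
            (fun x hx => ne_of_gt (hΨpos x hx))))).sub hgc))).bddAbove
      · exact ⟨a, Set.left_mem_Icc.mpr hab.le, rfl⟩
    exact le_trans (abs_nonneg _) this
  -- pointwise bound
  have hpt : ∀ x ∈ Set.Icc a b, |Ψ x - Real.exp (g x / τ)| ≤ (ζ / τ) * S := by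
    intro x hx
    have hΨx := hΨpos x hx
    have key := abs_exp_sub_exp_le (Real.log (Ψ x)) (g x / τ)
    simp only [Real.exp_log hΨx] at key
    have hb1 : Ψ x ≤ ζ := le_max_of_le_left (le_csSup hbd1 ⟨x, hx, rfl⟩)
    have hb2 : Real.exp (g x / τ) ≤ ζ := le_max_of_le_right (le_csSup hbd2 ⟨x, hx, rfl⟩)
    have hmax : max (Ψ x) (Real.exp (g x / τ)) ≤ ζ := max_le hb1 hb2
    have habs : |Real.log (Ψ x) - g x / τ| = |τ * Real.log (Ψ x) - g x| / τ := by
      have h1 : τ * Real.log (Ψ x) - g x = (Real.log (Ψ x) - g x / τ) * τ := by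
        field_simp
      rw [h1, abs_mul, abs_of_pos hτ, mul_div_cancel_right₀ _ (ne_of_gt hτ)]
    have hle : |τ * Real.log (Ψ x) - g x| ≤ S := by
      apply le_csSup
      · exact (hK.image_of_continuousOn (by
          apply ContinuousOn.abs
          exact ((continuousOn_const.mul ((Real.continuousOn_log.comp hΨc
            (fun x hx => ne_of_gt (hΨpos x hx))))).sub hgc))).bddAbove
      · exact ⟨x, hx, rfl⟩
    calc |Ψ x - Real.exp (g x / τ)|
        ≤ max (Ψ x) (Real.exp (g x / τ)) * |Real.log (Ψ x) - g x / τ| := key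
      _ ≤ ζ * |Real.log (Ψ x) - g x / τ| :=
          mul_le_mul_of_nonneg_right hmax (abs_nonneg _)
      _ = ζ * (|τ * Real.log (Ψ x) - g x| / τ) := by rw [habs]
      _ ≤ ζ * (S / τ) := by gcongr
      _ = (ζ / τ) * S := by ring
  have hsup : sSup ((fun x => |Ψ x - Real.exp (g x / τ)|) '' Set.Icc a b) ≤ (ζ / τ) * S := by
    apply csSup_le (hne.image _)
    rintro y ⟨x, hx, rfl⟩
    exact hpt x hx
  calc (τ / ζ) * sSup ((fun x => |Ψ x - Real.exp (g x / τ)|) '' Set.Icc a b)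
      ≤ (τ / ζ) * ((ζ / τ) * S) :=
        mul_le_mul_of_nonneg_left hsup (by positivity)
    _ = S := by field_simp
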